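/- For n ≥ 2 and integers b₁ ≥ b₂ ≥ ⋯ ≥ b_{n−1} ≥ 0 with b₁ ≤ 3 (and b_{n−1} = 0 if n is even), the map (a₂,…,a_n) ↦ Σ_{i=2}^{n} a_i·(a_i + 2(n−i)) is injective on the set T = {(a₂,…,a_n) ∈ ℤ^{n−1} : b₁ ≥ a₂ ≥ b₂ ≥ a₃ ≥ ⋯ ≥ b_{n−1} ≥ |a_n|} when n is even, respectively T = {(a₂,…,a_n) ∈ ℤ^{n−1} : b₁ ≥ a₂ ≥ b₂ ≥ ⋯ ≥ b_{n−1} ≥ a_n ≥ 0} when n is odd. -/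

import Mathlib

/-- Corollary 4.3(i) key condition: for `n ≥ 2` and integers
`b 1 ≥ b 2 ≥ ⋯ ≥ b (n-1) ≥ 0` with `b 1 ≤ 3` (and `b (n-1) = 0` if `n` is even),
the quadratic form `(a₂,…,aₙ) ↦ ∑_{i=2}^{n} aᵢ(aᵢ + 2(n-i))` is injective on the
interlacing set `T` (with `b (n-1) ≥ |aₙ|` when `n` is even, and
`b (n-1) ≥ aₙ ≥ 0` when `n` is odd). -/
theorem so_even_form_injective_b1_le_three (n : ℕ) (hn : 2 ≤ n) (b a a' : ℕ → ℤ)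
    (hbmono : ∀ i, 1 ≤ i → i ≤ n - 2 → b (i + 1) ≤ b i)
    (hbnn : 0 ≤ b (n - 1)) (hb1 : b 1 ≤ 3)
    (hbeven : Even n → b (n - 1) = 0)
    (ha1 : ∀ i, 2 ≤ i → i ≤ n - 1 → a i ≤ b (i - 1) ∧ b i ≤ a i)
    (ha2 : Even n → |a n| ≤ b (n - 1))
    (ha3 : ¬ Even n → 0 ≤ a n ∧ a n ≤ b (n - 1))
    (ha1' : ∀ i, 2 ≤ i → i ≤ n - 1 → a' i ≤ b (i - 1) ∧ b i ≤ a' i)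
    (ha2' : Even n → |a' n| ≤ b (n - 1))
    (ha3' : ¬ Even n → 0 ≤ a' n ∧ a' n ≤ b (n - 1))
    (hsum : ∑ i ∈ Finset.Icc 2 n, a i * (a i + 2 * ((n : ℤ) - (i : ℤ))) =
      ∑ i ∈ Finset.Icc 2 n, a' i * (a' i + 2 * ((n : ℤ) - (i : ℤ)))) :
    ∀ i, 2 ≤ i → i ≤ n → a i = a' i := by
  set D : ℕ → ℤ := fun i => a i - a' i with hDdef
  set W : ℕ → ℤ := fun i => a i + a' i + 2 * ((n : ℤ) - (i : ℤ)) with hWdef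
  -- b is antitone on [1, n-1]
  have hb' : ∀ k l : ℕ, 1 ≤ k → k ≤ l → l ≤ n - 1 → b l ≤ b k := by
    intro k l hk hkl
    induction l, hkl using Nat.le_induction with
    | base => intro _; exact le_rfl
    | succ l hl ih =>
      intro hln
      exact le_trans (hbmono l (by omega) (by omega)) (ih (by omega))
  have hbn : ∀ k, 1 ≤ k → k ≤ n - 1 → 0 ≤ b k := fun k hk hkn =>
    le_trans hbnn (hb' k (n - 1) hk hkn le_rfl)
  -- bounds at position n
  have hanb : a n ≤ b (n - 1) ∧ -(b (n - 1)) ≤ a n := by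
    by_cases he : Even n
    · have h := ha2 he; rw [abs_le] at h; exact ⟨h.2, h.1⟩
    · have h := ha3 he; exact ⟨h.2, by linarith [h.1, hbnn]⟩
  have hanb' : a' n ≤ b (n - 1) ∧ -(b (n - 1)) ≤ a' n := by
    by_cases he : Even n
    · have h := ha2' he; rw [abs_le] at h; exact ⟨h.2, h.1⟩
    · have h := ha3' he; exact ⟨h.2, by linarith [h.1, hbnn]⟩
  -- monotonicity of interlacing sequences
  have amono : ∀ (c : ℕ → ℤ), (∀ i, 2 ≤ i → i ≤ n - 1 → c i ≤ b (i - 1) ∧ b i ≤ c i) →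
      c n ≤ b (n - 1) → ∀ k l : ℕ, 2 ≤ k → k < l → l ≤ n → c l ≤ c k := by
    intro c hc hcn k l hk hkl hln
    have hck : b k ≤ c k := (hc k hk (by omega)).2
    by_cases hl : l ≤ n - 1
    · have h1 : c l ≤ b (l - 1) := (hc l (by omega) hl).1
      have h2 : b (l - 1) ≤ b k := hb' k (l - 1) (by omega) (by omega) (by omega)
      linarith
    · have hln' : l = n := by omega
      have h2 : b (n - 1) ≤ b k := hb' k (n - 1) (by omega) (by omega) le_rfl
      rw [hln']
      linarith
  -- the key identity
  have key : ∑ i ∈ Finset.Icc 2 n, D i * W i = 0 := by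
    have h1 : ∀ i ∈ Finset.Icc 2 n, D i * W i =
        a i * (a i + 2 * ((n : ℤ) - (i : ℤ))) - a' i * (a' i + 2 * ((n : ℤ) - (i : ℤ))) := by
      intro i _; simp only [hDdef, hWdef]; ring
    rw [Finset.sum_congr rfl h1, Finset.sum_sub_distrib, hsum, sub_self]
  -- parity
  have keyDD : (2 : ℤ) ∣ ∑ i ∈ Finset.Icc 2 n, D i * D i := by
    have h1 : ∀ i ∈ Finset.Icc 2 n, D i * W i =
        D i * D i + 2 * (D i * (a' i + ((n : ℤ) - (i : ℤ)))) := by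
      intro i _; simp only [hDdef, hWdef]; ring
    have h2 : ∑ i ∈ Finset.Icc 2 n, D i * W i =
        (∑ i ∈ Finset.Icc 2 n, D i * D i) +
          2 * ∑ i ∈ Finset.Icc 2 n, D i * (a' i + ((n : ℤ) - (i : ℤ))) := by
      rw [Finset.sum_congr rfl h1, Finset.sum_add_distrib, ← Finset.mul_sum]
    exact ⟨-∑ i ∈ Finset.Icc 2 n, D i * (a' i + ((n : ℤ) - (i : ℤ))), by linarith [key, h2]⟩
  have parS : (2 : ℤ) ∣ ∑ i ∈ Finset.Icc 2 n, |D i| := by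
    have h3 : (2 : ℤ) ∣ ∑ i ∈ Finset.Icc 2 n, (D i * D i - |D i|) := by
      apply Finset.dvd_sum
      intro i _
      have h4 : D i * D i - |D i| = (|D i| - 1) * ((|D i| - 1) + 1) := by
        have := abs_mul_abs_self (D i)
        nlinarith [this]
      rw [h4]
      exact (Int.even_mul_succ_self (|D i| - 1)).two_dvd
    have h5 : ∑ i ∈ Finset.Icc 2 n, |D i| =
        (∑ i ∈ Finset.Icc 2 n, D i * D i) - ∑ i ∈ Finset.Icc 2 n, (D i * D i - |D i|) := by
      rw [← Finset.sum_sub_distrib]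
      exact Finset.sum_congr rfl (fun i _ => by ring)
    rw [h5]; exact dvd_sub keyDD h3
  -- |D n| ≤ b (n-1)
  have hDn : |D n| ≤ b (n - 1) := by
    by_cases he : Even n
    · have h := ha2 he; have h' := ha2' he
      rw [hbeven he] at h h' ⊢
      rw [abs_le] at h h' ⊢
      constructor <;> simp only [hDdef] <;> linarith [h.1, h.2, h'.1, h'.2]
    · have h := ha3 he; have h' := ha3' he
      rw [abs_le]; constructor <;> simp only [hDdef] <;> linarith [h.1, h.2, h'.1, h'.2]
  -- telescoping bound
  have tele : ∀ m : ℕ, 1 ≤ m → m ≤ n - 1 → ∑ i ∈ Finset.Icc 2 m, |D i| ≤ b 1 - b m := by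
    intro m hm
    induction m, hm using Nat.le_induction with
    | base =>
      intro _
      rw [Finset.Icc_eq_empty (by omega)]
      simp
    | succ m hm ih =>
      intro hmn
      rw [Finset.sum_Icc_succ_top (by omega : 2 ≤ m + 1)]
      have h1 := ih (by omega)
      have h2 : |D (m + 1)| ≤ b m - b (m + 1) := by
        have ha := ha1 (m + 1) (by omega) hmn
        have ha' := ha1' (m + 1) (by omega) hmn
        simp only [Nat.add_sub_cancel] at ha ha'
        rw [abs_le]; constructor <;> simp only [hDdef] <;>
          linarith [ha.1, ha.2, ha'.1, ha'.2]
      linarith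
  have totvar : ∑ i ∈ Finset.Icc 2 n, |D i| ≤ 3 := by
    have e : Finset.Icc 2 n = Finset.Icc 2 ((n - 1) + 1) := by congr 1; omega
    rw [e, Finset.sum_Icc_succ_top (by omega : 2 ≤ (n - 1) + 1)]
    have h1 := tele (n - 1) (by omega) le_rfl
    have h2 : |D ((n - 1) + 1)| ≤ b (n - 1) := by
      rw [show (n - 1) + 1 = n by omega]; exact hDn
    linarith
  have habs_nonneg : ∀ i ∈ Finset.Icc 2 n, (0 : ℤ) ≤ |D i| := fun i _ => abs_nonneg _
  have hS : (∑ i ∈ Finset.Icc 2 n, |D i|) = 0 ∨ (∑ i ∈ Finset.Icc 2 n, |D i|) = 2 := by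
    have h0 : 0 ≤ ∑ i ∈ Finset.Icc 2 n, |D i| := Finset.sum_nonneg habs_nonneg
    omega
  rcases hS with h | h
  · -- all equal
    intro i h2i hin
    have h6 := (Finset.sum_eq_zero_iff_of_nonneg habs_nonneg).mp h i (Finset.mem_Icc.mpr ⟨h2i, hin⟩)
    have h7 : D i = 0 := abs_eq_zero.mp h6
    simp only [hDdef] at h7
    linarith
  · exfalso
    set T := (Finset.Icc 2 n).filter (fun i => D i ≠ 0) with hTdef
    have hTne : T.Nonempty := by
      rw [hTdef, Finset.filter_nonempty_iff]
      by_contra hne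
      push_neg at hne
      have h8 : ∑ i ∈ Finset.Icc 2 n, |D i| = 0 := by
        apply Finset.sum_eq_zero
        intro i hi
        rw [hne i hi, abs_zero]
      omega
    set i0 := T.min' hTne with hi0def
    have hi0T : i0 ∈ T := T.min'_mem hTne
    obtain ⟨hi0Icc, hDi0⟩ := Finset.mem_filter.mp hi0T
    obtain ⟨hi02, hi0n⟩ := Finset.mem_Icc.mp hi0Icc
    -- W positivity on support
    have hWpos : ∀ i : ℕ, 2 ≤ i → i ≤ n → D i ≠ 0 → 1 ≤ W i := by
      intro i h2 hin hDi
      by_cases hi : i ≤ n - 1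
      · have hai := ha1 i h2 hi
        have hai' := ha1' i h2 hi
        have hbi : 0 ≤ b i := hbn i (by omega) hi
        have hni : (1 : ℤ) ≤ (n : ℤ) - (i : ℤ) := by omega
        simp only [hWdef]
        linarith [hai.2, hai'.2]
      · have hin' : i = n := by omega
        rw [hin'] at hDi ⊢
        by_cases he : Even n
        · exfalso
          have h2e := ha2 he; have h2e' := ha2' he
          rw [hbeven he] at h2e h2e'
          have e1 : a n = 0 := abs_eq_zero.mp (le_antisymm h2e (abs_nonneg _))
          have e2 : a' n = 0 := abs_eq_zero.mp (le_antisymm h2e' (abs_nonneg _))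
          exact hDi (by simp [hDdef, e1, e2])
        · have h3e := ha3 he; have h3e' := ha3' he
          have hne : a n ≠ a' n := by
            intro hq; exact hDi (by simp [hDdef, hq])
          have h1 : 0 ≤ a n := h3e.1
          have h1' : 0 ≤ a' n := h3e'.1
          have hsum1 : 1 ≤ a n + a' n := by omega
          simp only [hWdef]
          have hz : (2 : ℤ) * ((n : ℤ) - (n : ℤ)) = 0 := by ring
          linarith
    -- W strictly decreasing past i0 on support
    have hWdec : ∀ i : ℕ, i0 < i → i ≤ n → D i ≠ 0 → W i ≤ W i0 - 2 := by
      intro i hi0i hin hDi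
      have h1 : a i ≤ a i0 := amono a ha1 hanb.1 i0 i hi02 hi0i hin
      have h2 : a' i ≤ a' i0 := amono a' ha1' hanb'.1 i0 i hi02 hi0i hin
      have h3 : (i0 : ℤ) + 1 ≤ (i : ℤ) := by omega
      simp only [hWdef]
      linarith
    have hsplit : D i0 * W i0 + ∑ i ∈ (Finset.Icc 2 n).erase i0, D i * W i = 0 :=
      (Finset.add_sum_erase (Finset.Icc 2 n) (fun i => D i * W i) hi0Icc).trans key
    have habs2 : |D i0| + ∑ i ∈ (Finset.Icc 2 n).erase i0, |D i| = 2 :=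
      (Finset.add_sum_erase (Finset.Icc 2 n) (fun i => |D i|) hi0Icc).trans h
    have hu1 : 1 ≤ |D i0| := by
      have := abs_pos.mpr hDi0; omega
    have hW0 : 1 ≤ W i0 := hWpos i0 hi02 hi0n hDi0
    have hbound : |D i0| * W i0 ≤ (2 - |D i0|) * (W i0 - 2) := by
      have e1 : D i0 * W i0 = -∑ i ∈ (Finset.Icc 2 n).erase i0, D i * W i := by
        linarith [hsplit]
      calc |D i0| * W i0 = |D i0 * W i0| := by
            rw [abs_mul, abs_of_nonneg (by linarith : (0 : ℤ) ≤ W i0)]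
        _ = |∑ i ∈ (Finset.Icc 2 n).erase i0, D i * W i| := by rw [e1, abs_neg]
        _ ≤ ∑ i ∈ (Finset.Icc 2 n).erase i0, |D i * W i| :=
            Finset.abs_sum_le_sum_abs _ _
        _ ≤ ∑ i ∈ (Finset.Icc 2 n).erase i0, |D i| * (W i0 - 2) := by
            apply Finset.sum_le_sum
            intro i hi
            rcases eq_or_ne (D i) 0 with h0 | h0
            · simp [h0]
            · have hiIcc := Finset.mem_of_mem_erase hi
              obtain ⟨h2i, hin⟩ := Finset.mem_Icc.mp hiIcc
              have hne : i ≠ i0 := Finset.ne_of_mem_erase hi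
              have hiT : i ∈ T := by
                rw [hTdef]; exact Finset.mem_filter.mpr ⟨hiIcc, h0⟩
              have hge : i0 ≤ i := T.min'_le i hiT
              have hlt : i0 < i := lt_of_le_of_ne hge (Ne.symm hne)
              have hWi := hWdec i hlt hin h0
              have hWip := hWpos i h2i hin h0
              rw [abs_mul, abs_of_nonneg (by linarith : (0 : ℤ) ≤ W i)]
              exact mul_le_mul_of_nonneg_left (by linarith) (abs_nonneg _)
        _ = (∑ i ∈ (Finset.Icc 2 n).erase i0, |D i|) * (W i0 - 2) :=
            (Finset.sum_mul _ _ _).symm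
        _ = (2 - |D i0|) * (W i0 - 2) := by
            have : (∑ i ∈ (Finset.Icc 2 n).erase i0, |D i|) = 2 - |D i0| := by linarith
            rw [this]
    have hu2 : |D i0| ≤ 2 := by
      have h9 : 0 ≤ ∑ i ∈ (Finset.Icc 2 n).erase i0, |D i| :=
        Finset.sum_nonneg (fun i _ => abs_nonneg _)
      linarith
    nlinarith [hbound, hu1, hu2, hW0,
      mul_nonneg (by linarith : (0 : ℤ) ≤ |D i0| - 1) (by linarith : (0 : ℤ) ≤ W i0 - 1)]
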